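/- The map sending a blocking-Nim_k position to the pair (XOR of the quotients ⌊a_i/k⌋, maximum of the remainders a_i mod k) is a monoid homomorphism from the free commutative monoid of positions to the product of (ℕ, XOR) with the k-element linear order {0,...,k−1} under max, and the outcome function (for every constraint) factors through this map. -/

import Mathlib

instance : Std.Commutative (α := ℕ) (· ^^^ ·) := ⟨Nat.xor_comm⟩
instance : Std.Associative (α := ℕ) (· ^^^ ·) := ⟨Nat.xor_assoc⟩

/-- The nim-sum (bitwise XOR) of a finite multiset. -/
def nimSum (s : Multiset ℕ) : ℕ := Multiset.fold (· ^^^ ·) 0 s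

abbrev BState := Multiset ℕ × Finset ℕ

/-- A move in blocking Nim with parameter `k`. -/
def BMove (k : ℕ) (p q : BState) : Prop :=
  ∃ a ∈ p.1, ∃ b < a, (a - b) ∉ p.2 ∧ q.1 = b ::ₘ p.1.erase a ∧
    q.2.card = k - 1 ∧ 0 ∉ q.2

mutual
inductive BP (k : ℕ) : BState → Prop
  | mk (p : BState) : (∀ q, BMove k p q → BN k q) → BP k p

inductive BN (k : ℕ) : BState → Prop
  | mk (p q : BState) : BMove k p q → BP k q → BN k p
end

/-- The blocking-Nim_k invariant of a position: the XOR of the quotients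
`⌊aᵢ/k⌋` together with the maximum of the remainders `aᵢ mod k`. -/
def bInv (k : ℕ) (s : Multiset ℕ) : ℕ × ℕ :=
  (nimSum (s.map (· / k)), (s.map (· % k)).sup)

/- ### Auxiliary lemmas -/

lemma nimSum_cons (a : ℕ) (s : Multiset ℕ) : nimSum (a ::ₘ s) = a ^^^ nimSum s :=
  Multiset.fold_cons_left _ _ _ _

lemma nimSum_zero : nimSum 0 = 0 := rfl

lemma testBit_of_nimSum (m : Multiset ℕ) (i : ℕ) (h : (nimSum m).testBit i = true) :
    ∃ a ∈ m, a.testBit i = true := by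
  induction m using Multiset.induction with
  | empty => simp [nimSum_zero] at h
  | cons a t ih =>
    rw [nimSum_cons, Nat.testBit_xor] at h
    by_cases ha : a.testBit i = true
    · exact ⟨a, Multiset.mem_cons_self a t, ha⟩
    · have hb : (nimSum t).testBit i = true := by
        cases hb : (nimSum t).testBit i <;> simp_all
      obtain ⟨b, hbm, hbt⟩ := ih hb
      exact ⟨b, Multiset.mem_cons_of_mem hbm, hbt⟩

lemma exists_top_bit {X : ℕ} (hX : X ≠ 0) :
    ∃ i, X.testBit i = true ∧ ∀ j, i < j → X.testBit j = false := by
  refine ⟨Nat.log2 X, ?_, fun j hj => ?_⟩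
  · have h1 : 2 ^ Nat.log2 X ≤ X := Nat.log2_self_le hX
    have h2 : X < 2 ^ (Nat.log2 X + 1) := Nat.lt_log2_self
    have hdiv : X / 2 ^ Nat.log2 X = 1 := by
      have hpos : 0 < 2 ^ Nat.log2 X := Nat.pow_pos (by norm_num)
      have h3 : 1 ≤ X / 2 ^ Nat.log2 X := (Nat.le_div_iff_mul_le hpos).mpr (by omega)
      have h4 : X / 2 ^ Nat.log2 X < 2 := (Nat.div_lt_iff_lt_mul hpos).mpr
        (by rw [Nat.pow_succ] at h2; omega)
      omega
    rw [Nat.testBit_eq_decide_div_mod_eq, hdiv]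
    rfl
  · apply Nat.testBit_lt_two_pow
    calc X < 2 ^ (Nat.log2 X + 1) := Nat.lt_log2_self
    _ ≤ 2 ^ j := Nat.pow_le_pow_right (by norm_num) hj

lemma exists_xor_lt (m : Multiset ℕ) (h : nimSum m ≠ 0) :
    ∃ a ∈ m, a ^^^ nimSum m < a := by
  obtain ⟨i, hi, htop⟩ := exists_top_bit h
  obtain ⟨a, ham, hai⟩ := testBit_of_nimSum m i hi
  refine ⟨a, ham, Nat.lt_of_testBit i ?_ hai fun j hj => ?_⟩
  · rw [Nat.testBit_xor, hai, hi]; rfl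
  · rw [Nat.testBit_xor, htop j hj, Bool.xor_false]

lemma sup_attained (m : Multiset ℕ) : m.sup = 0 ∨ ∃ a ∈ m, a = m.sup := by
  induction m using Multiset.induction with
  | empty => left; rfl
  | cons a t ih =>
    rw [Multiset.sup_cons]
    rcases le_total a t.sup with h | h
    · rcases ih with h0 | ⟨b, hb, hbs⟩
      · left; simp [h0] at h ⊢; omega
      · right; exact ⟨b, Multiset.mem_cons_of_mem hb, by rw [hbs]; exact (sup_eq_right.mpr h).symm⟩
    · right; exact ⟨a, Multiset.mem_cons_self a t, (sup_eq_left.mpr h).symm⟩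

lemma nimSum_erase {s : Multiset ℕ} {a : ℕ} (h : a ∈ s) (f : ℕ → ℕ) :
    nimSum ((s.erase a).map f) = f a ^^^ nimSum (s.map f) := by
  conv_rhs => rw [← Multiset.cons_erase h]
  rw [Multiset.map_cons, nimSum_cons, xor_cancel_left]

/-- The winning condition: zero nim-sum of quotients and all of `{1,…,maxrem}` blocked. -/
def Cond (k : ℕ) (s : Multiset ℕ) (S : Finset ℕ) : Prop :=
  (bInv k s).1 = 0 ∧ ∀ j, 1 ≤ j → j ≤ (bInv k s).2 → j ∈ S

lemma rem_sup_lt (k : ℕ) (hk : 1 ≤ k) (s : Multiset ℕ) : (s.map (· % k)).sup < k := by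
  have : (s.map (· % k)).sup ≤ k - 1 := by
    apply Multiset.sup_le.mpr
    intro b hb
    obtain ⟨c, _, rfl⟩ := Multiset.mem_map.mp hb
    have := Nat.mod_lt c (show 0 < k by omega)
    omega
  omega

/-- A move strictly decreases the total number of tokens. -/
lemma move_sum_lt {k : ℕ} {p q : BState} (h : BMove k p q) : q.1.sum < p.1.sum := by
  obtain ⟨a, ha, b, hb, _, hq1, _⟩ := h
  have := Multiset.cons_erase ha
  have hsum : p.1.sum = a + (p.1.erase a).sum := by
    conv_lhs => rw [← this]
    rw [Multiset.sum_cons]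
  rw [hq1, Multiset.sum_cons]
  omega

/-- P-positions and N-positions are disjoint. -/
lemma not_BP_and_BN (k : ℕ) : ∀ n (p : BState), p.1.sum = n → BP k p → BN k p → False := by
  intro n
  induction n using Nat.strong_induction_on with
  | _ n IH =>
    intro p hsum hP hN
    obtain ⟨p, q, hmove, hPq⟩ := hN
    cases hP with
    | mk p hmoves =>
      exact IH q.1.sum (hsum ▸ move_sum_lt hmove) q rfl hPq (hmoves q hmove)

lemma main (k : ℕ) (hk : 1 ≤ k) :
    ∀ n (s : Multiset ℕ) (S : Finset ℕ), s.sum = n → S.card = k - 1 → 0 ∉ S →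
      (Cond k s S → BP k (s, S)) ∧ (¬Cond k s S → BN k (s, S)) := by
  intro n
  induction n using Nat.strong_induction_on with
  | _ n IH =>
    intro s S hsum hcard hS0
    constructor
    · -- Cond → BP
      intro hc
      refine BP.mk _ (fun q hq => ?_)
      have hlt : q.1.sum < n := hsum ▸ move_sum_lt hq
      obtain ⟨a, ha, b, hb, hdS, hq1, hq2c, hq20⟩ := hq
      -- the move must decrease the quotient of the chosen pile
      have hd1 : 1 ≤ a - b := by omega
      have hrem : a % k ≤ (bInv k s).2 :=
        Multiset.le_sup (Multiset.mem_map.mpr ⟨a, ha, rfl⟩)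
      have hdgt : a % k < a - b := by
        by_contra hcon
        exact hdS (hc.2 (a - b) hd1 (le_trans (by omega) hrem))
      have hbq : b / k < a / k := by
        have hb' : b < a / k * k := by
          have h5 := Nat.div_add_mod a k
          have h6 : a / k * k = k * (a / k) := Nat.mul_comm _ _
          omega
        exact (Nat.div_lt_iff_lt_mul (by omega)).mpr hb'
      have hX' : nimSum (q.1.map (· / k)) ≠ 0 := by
        rw [hq1, Multiset.map_cons, nimSum_cons, nimSum_erase ha]
        have h0 : nimSum (s.map (· / k)) = 0 := hc.1
        rw [h0, Nat.xor_zero]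
        intro hcon
        exact absurd (xor_eq_zero_iff.mp hcon) (by omega)
      have hnc : ¬Cond k q.1 q.2 := fun hcc => hX' hcc.1
      have := (IH q.1.sum hlt q.1 q.2 rfl hq2c hq20).2 hnc
      exact this
    · -- ¬Cond → BN
      intro hnc
      -- in either case we produce a move to a Cond-position with blocking set Icc 1 (k-1)
      set S' : Finset ℕ := Finset.Icc 1 (k - 1) with hS'
      have hS'c : S'.card = k - 1 := by rw [hS', Nat.card_Icc]; omega
      have hS'0 : 0 ∉ S' := by simp [hS']
      have hS'mem : ∀ j, 1 ≤ j → j ≤ k - 1 → j ∈ S' := by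
        intro j h1 h2; rw [hS', Finset.mem_Icc]; exact ⟨h1, h2⟩
      by_cases hX : nimSum (s.map (· / k)) = 0
      case neg
      · -- nim-sum of quotients nonzero
        obtain ⟨x, hxm, hxlt⟩ := exists_xor_lt _ hX
        obtain ⟨a, ha, rfl⟩ := Multiset.mem_map.mp hxm
        set X := nimSum (s.map (· / k)) with hXdef
        set Q : ℕ := a / k ^^^ X with hQ
        -- candidate moves: reduce pile a to k*Q + r' for r' < k
        have hbound : ∀ r' < k, k * Q + r' < a := by
          intro r' hr'
          have h1 : Q + 1 ≤ a / k := hxlt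
          have h2 := Nat.div_add_mod a k
          have h3 : k * (Q + 1) ≤ k * (a / k) := Nat.mul_le_mul_left k h1
          have h4 : k * (Q + 1) = k * Q + k := by ring
          omega
        set T : Finset ℕ := (Finset.range k).image (fun r' => a - (k * Q + r')) with hT
        have hTcard : T.card = k := by
          rw [hT, Finset.card_image_of_injOn, Finset.card_range]
          intro x hx y hy hxy
          have hx' : x < k := by simpa using hx
          have hy' : y < k := by simpa using hy
          have := hbound x hx'
          have := hbound y hy'
          have hxy' : a - (k * Q + x) = a - (k * Q + y) := hxy
          omega
        have hTd : ∃ d ∈ T, d ∉ S := by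
          by_contra hcon
          push_neg at hcon
          have := Finset.card_le_card (fun d hd => hcon d hd)
          omega
        obtain ⟨d, hdT, hdS⟩ := hTd
        obtain ⟨r', hr', rfl⟩ := Finset.mem_image.mp hdT
        rw [Finset.mem_range] at hr'
        set b := k * Q + r' with hbdef
        have hba : b < a := hbound r' hr'
        have hbq : b / k = Q := by
          rw [hbdef, Nat.mul_add_div (by omega), Nat.div_eq_of_lt hr', Nat.add_zero]
        refine BN.mk _ (b ::ₘ s.erase a, S') ⟨a, ha, b, hba, hdS, rfl, hS'c, hS'0⟩ ?_
        have hless : (b ::ₘ s.erase a).sum < n := by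
          have : s.sum = a + (s.erase a).sum := by
            conv_lhs => rw [← Multiset.cons_erase ha]; rw [Multiset.sum_cons]
          rw [Multiset.sum_cons]; omega
        apply (IH _ hless _ S' rfl hS'c hS'0).1
        constructor
        · show nimSum ((b ::ₘ s.erase a).map (· / k)) = 0
          rw [Multiset.map_cons, nimSum_cons, nimSum_erase ha]
          show b / k ^^^ (a / k ^^^ X) = 0
          rw [hbq, hQ, xor_eq_zero_iff]
        · intro j h1 h2
          apply hS'mem j h1
          have hlt2 : (bInv k (b ::ₘ s.erase a)).2 < k := rem_sup_lt k hk _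
          omega
      case pos
      · -- some needed blocker is missing
        have hR : ∃ j, 1 ≤ j ∧ j ≤ (bInv k s).2 ∧ j ∉ S := by
          by_contra h
          push_neg at h
          exact hnc ⟨hX, fun j h1 h2 => h j h1 h2⟩
        obtain ⟨j, hj1, hjR, hjS⟩ := hR
        -- the sup of remainders is attained
        rcases sup_attained (s.map (· % k)) with h0 | ⟨x, hxm, hxs⟩
        · exfalso
          have : (bInv k s).2 = 0 := h0
          omega
        obtain ⟨a, ha, rfl⟩ := Multiset.mem_map.mp hxm
        have hjr : j ≤ a % k := by rw [hxs]; exact hjR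
        have hja : j ≤ a := le_trans hjr (Nat.mod_le a k)
        set b := a - j with hbdef
        have hba : b < a := by omega
        have hab : a - b = j := by omega
        refine BN.mk _ (b ::ₘ s.erase a, S') ⟨a, ha, b, hba, (by rw [hab]; exact hjS), rfl, hS'c, hS'0⟩ ?_
        have hless : (b ::ₘ s.erase a).sum < n := by
          have : s.sum = a + (s.erase a).sum := by
            conv_lhs => rw [← Multiset.cons_erase ha]; rw [Multiset.sum_cons]
          rw [Multiset.sum_cons]; omega
        apply (IH _ hless _ S' rfl hS'c hS'0).1
        have hbq : b / k = a / k := by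
          have h1 := Nat.div_add_mod a k
          have h2 : b = k * (a / k) + (a % k - j) := by omega
          have h3 : a % k - j < k := by
            have := Nat.mod_lt a (show 0 < k by omega); omega
          rw [h2, Nat.mul_add_div (by omega), Nat.div_eq_of_lt h3, Nat.add_zero]
        constructor
        · show nimSum ((b ::ₘ s.erase a).map (· / k)) = 0
          rw [Multiset.map_cons, nimSum_cons, nimSum_erase ha, hX, Nat.xor_zero, hbq,
            xor_eq_zero_iff]
        · intro j' h1 h2
          apply hS'mem j' h1
          have hlt2 : (bInv k (b ::ₘ s.erase a)).2 < k := rem_sup_lt k hk _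
          omega

lemma BP_iff_Cond (k : ℕ) (hk : 1 ≤ k) (s : Multiset ℕ) (S : Finset ℕ)
    (hcard : S.card = k - 1) (hS0 : 0 ∉ S) : BP k (s, S) ↔ Cond k s S := by
  constructor
  · intro h
    by_contra hc
    exact not_BP_and_BN k s.sum (s, S) rfl h ((main k hk s.sum s S rfl hcard hS0).2 hc)
  · exact (main k hk s.sum s S rfl hcard hS0).1

/-- The map `bInv k` is a monoid homomorphism from the free commutative monoid
of positions to the product of `(ℕ, XOR)` with the `k`-element linear order
`{0, …, k-1}` under `max`, and the outcome function (for every constraint set)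
factors through it. -/
theorem stmt10 (k : ℕ) (hk : 1 ≤ k) :
    (∀ s t : Multiset ℕ,
      bInv k (s + t) = ((bInv k s).1 ^^^ (bInv k t).1, max (bInv k s).2 (bInv k t).2)) ∧
    (∀ s : Multiset ℕ, (bInv k s).2 < k) ∧
    (∀ s t : Multiset ℕ, bInv k s = bInv k t →
      ∀ S : Finset ℕ, S.card = k - 1 → (∀ j ∈ S, 0 < j) →
        (BP k (s, S) ↔ BP k (t, S))) := by
  refine ⟨?_, ?_, ?_⟩
  · intro s t
    have h1 : nimSum ((s + t).map (· / k)) =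
        nimSum (s.map (· / k)) ^^^ nimSum (t.map (· / k)) := by
      rw [Multiset.map_add]
      unfold nimSum
      simpa using Multiset.fold_add (α := ℕ) (· ^^^ ·) 0 0 (s.map (· / k)) (t.map (· / k))
    have h2 : ((s + t).map (· % k)).sup =
        max (s.map (· % k)).sup (t.map (· % k)).sup := by
      rw [Multiset.map_add, Multiset.sup_add]
    exact Prod.ext h1 h2
  · intro s
    exact rem_sup_lt k hk s
  · intro s t hst S hcard hpos
    have hS0 : 0 ∉ S := fun h => absurd (hpos 0 h) (by omega)
    rw [BP_iff_Cond k hk s S hcard hS0, BP_iff_Cond k hk t S hcard hS0, Cond, Cond, hst]
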